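/- Let Ω = { z ∈ ℂ : z ≠ 0 and |z| < (cos(arg z / 2))⁴ }, where arg denotes the principal argument in (−π, π], and let D = { w ∈ ℂ : |w| < 1 and w ≠ −1 }. Then the map F(z) = 2·|z|^{1/4}·exp(i·arg z / 2) − 1 is a bijection from Ω onto D. -/

import Mathlib

noncomputable section

open Complex Real Set

private lemma aux_normSq (t φ : ℝ) :
    Complex.normSq (2 * (t : ℂ) * Complex.exp (Complex.I * (φ : ℂ)) - 1)
      = 4 * t ^ 2 - 4 * t * Real.cos φ + 1 := by
  rw [mul_comm Complex.I, Complex.exp_mul_I]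
  simp [Complex.normSq_apply, Complex.cos_ofReal_re, Complex.sin_ofReal_re]
  nlinarith [Real.sin_sq_add_cos_sq φ]

private lemma aux_arg_exp {φ : ℝ} (hφ : φ ∈ Set.Ioc (-Real.pi) Real.pi) :
    Complex.arg (Complex.exp (Complex.I * (φ : ℂ))) = φ := by
  rw [mul_comm, Complex.exp_mul_I]
  exact Complex.arg_cos_add_sin_mul_I hφ

private lemma aux_t4 (z : ℂ) : (‖z‖ ^ ((1:ℝ)/4)) ^ (4:ℕ) = ‖z‖ := by
  rw [← Real.rpow_natCast (‖z‖ ^ ((1:ℝ)/4)) 4,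
    ← Real.rpow_mul (norm_nonneg z)]
  norm_num

/-- the map `F(z) = 2·|z|^{1/4}·exp(i·arg z/2) − 1` is a bijection from the
interior (minus the origin) of the domain bounded by `ρ = cos⁴(θ/2)` onto the unit disc with
the point `−1` removed. -/
theorem stmt14 :
    let F : ℂ → ℂ := fun z =>
      2 * ((‖z‖ ^ ((1 : ℝ) / 4) : ℝ) : ℂ) *
        Complex.exp (Complex.I * ((Complex.arg z / 2 : ℝ) : ℂ)) - 1
    let Ω : Set ℂ := {z | z ≠ 0 ∧ ‖z‖ < Real.cos (Complex.arg z / 2) ^ 4}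
    let D : Set ℂ := {w | ‖w‖ < 1 ∧ w ≠ -1}
    Set.BijOn F Ω D ∧ F '' Ω = D := by
  intro F Ω D
  have harg2 : ∀ z : ℂ, Complex.arg z / 2 ∈ Set.Ioc (-Real.pi) Real.pi := by
    intro z
    have h1 := Complex.neg_pi_lt_arg z
    have h2 := Complex.arg_le_pi z
    have hπ := Real.pi_pos
    constructor <;> [linarith; linarith]
  have hcosarg : ∀ z : ℂ, 0 ≤ Real.cos (Complex.arg z / 2) := by
    intro z
    apply Real.cos_nonneg_of_mem_Icc
    have h1 := Complex.neg_pi_lt_arg z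
    have h2 := Complex.arg_le_pi z
    constructor <;> [linarith; linarith]
  have hmem : ∀ z ∈ Ω, 0 < ‖z‖ ^ ((1:ℝ)/4) ∧
      ‖z‖ ^ ((1:ℝ)/4) < Real.cos (Complex.arg z / 2) := by
    intro z hz
    obtain ⟨hz0, hzlt⟩ := hz
    have ht : 0 < ‖z‖ ^ ((1:ℝ)/4) :=
      Real.rpow_pos_of_pos (norm_pos_iff.mpr hz0) _
    refine ⟨ht, ?_⟩
    apply lt_of_pow_lt_pow_left₀ 4 (hcosarg z)
    rw [aux_t4 z]
    exact hzlt
  have hmaps : ∀ z ∈ Ω, F z ∈ D := by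
    intro z hz
    obtain ⟨ht, htc⟩ := hmem z hz
    simp only [F, D, Set.mem_setOf_eq]
    constructor
    · apply lt_of_pow_lt_pow_left₀ 2 zero_le_one
      rw [Complex.sq_norm, one_pow, aux_normSq]
      nlinarith
    · intro h
      have h0 : 2 * ((‖z‖ ^ ((1:ℝ)/4) : ℝ) : ℂ) *
          Complex.exp (Complex.I * ((Complex.arg z / 2 : ℝ) : ℂ)) = 0 := by
        linear_combination h
      rcases mul_eq_zero.mp h0 with h1 | h1
      · rcases mul_eq_zero.mp h1 with h2 | h2
        · norm_num at h2
        · exact absurd (Complex.ofReal_eq_zero.mp h2) (ne_of_gt ht)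
      · exact Complex.exp_ne_zero _ h1
  have hinj : Set.InjOn F Ω := by
    intro z₁ h₁ z₂ h₂ hF
    obtain ⟨ht₁, _⟩ := hmem z₁ h₁
    obtain ⟨ht₂, _⟩ := hmem z₂ h₂
    simp only [F] at hF
    set t₁ := ‖z₁‖ ^ ((1:ℝ)/4)
    set t₂ := ‖z₂‖ ^ ((1:ℝ)/4)
    set φ₁ := Complex.arg z₁ / 2
    set φ₂ := Complex.arg z₂ / 2
    have key : 2 * (t₁:ℂ) * Complex.exp (Complex.I * (φ₁:ℂ))
        = 2 * (t₂:ℂ) * Complex.exp (Complex.I * (φ₂:ℂ)) := by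
      linear_combination hF
    have habs : t₁ = t₂ := by
      have h := congrArg norm key
      simp only [norm_mul, Complex.norm_real, mul_comm Complex.I] at h
      rw [Complex.norm_exp_ofReal_mul_I, Complex.norm_exp_ofReal_mul_I] at h
      simpa [Real.norm_eq_abs, abs_of_pos ht₁, abs_of_pos ht₂] using h
    have hexp : Complex.exp (Complex.I * (φ₁:ℂ)) = Complex.exp (Complex.I * (φ₂:ℂ)) := by
      have hne : (2 * (t₁:ℂ)) ≠ 0 := by
        simp [ne_of_gt ht₁]
      apply mul_left_cancel₀ hne
      rw [mul_assoc, mul_assoc] at key ⊢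
      rw [key, habs]
    have hargeq : φ₁ = φ₂ := by
      have h := congrArg Complex.arg hexp
      rwa [aux_arg_exp (harg2 z₁), aux_arg_exp (harg2 z₂)] at h
    apply Complex.ext_norm_arg
    · have h : t₁ ^ (4:ℕ) = t₂ ^ (4:ℕ) := by rw [habs]
      rwa [aux_t4 z₁, aux_t4 z₂] at h
    · have h : φ₁ * 2 = φ₂ * 2 := by rw [hargeq]
      simpa [φ₁, φ₂, div_mul_cancel₀] using h
  have hsurj : ∀ w ∈ D, ∃ z ∈ Ω, F z = w := by
    intro w hw
    obtain ⟨hw1, hw2⟩ := hw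
    set u : ℂ := (w + 1) / 2 with hudef
    have hu0 : u ≠ 0 := by
      simp only [hudef, div_ne_zero_iff]
      constructor
      · intro h; apply hw2; linear_combination h
      · norm_num
    set s := ‖u‖ with hsdef
    set φ := Complex.arg u with hφdef
    have hs : 0 < s := norm_pos_iff.mpr hu0
    have hwu : w = 2 * u - 1 := by rw [hudef]; ring
    have hslt : s < Real.cos φ := by
      have h1 : Complex.normSq w < 1 := by
        rw [← Complex.sq_norm]
        nlinarith [norm_nonneg w]
      have h2 : Complex.normSq w = 4 * Complex.normSq u - 4 * u.re + 1 := by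
        rw [hwu]; simp [Complex.normSq_apply]; ring
      have h3 : Complex.normSq u = s ^ 2 := by
        rw [← Complex.sq_norm]
      have h4 : u.re = s * Real.cos φ := by
        rw [hsdef, hφdef, Complex.cos_arg hu0]
        field_simp
      nlinarith
    have hcosφpos : 0 < Real.cos φ := hs.trans hslt
    have hφpi : φ ≤ Real.pi := Complex.arg_le_pi u
    have hφnpi : -Real.pi < φ := Complex.neg_pi_lt_arg u
    have hπ := Real.pi_pos
    have hφlt : φ < Real.pi / 2 := by
      by_contra h
      push_neg at h
      have := Real.cos_nonpos_of_pi_div_two_le_of_le h (by linarith)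
      linarith
    have hφgt : -(Real.pi / 2) < φ := by
      by_contra h
      push_neg at h
      have h' := Real.cos_nonpos_of_pi_div_two_le_of_le (x := -φ) (by linarith) (by linarith)
      rw [Real.cos_neg] at h'
      linarith
    have h2φ : 2 * φ ∈ Set.Ioc (-Real.pi) Real.pi := ⟨by linarith, by linarith⟩
    have hs4 : (0:ℝ) < s ^ (4:ℕ) := by positivity
    obtain ⟨z, hargz, habsz⟩ : ∃ z : ℂ, Complex.arg z = 2 * φ ∧ ‖z‖ = s ^ (4:ℕ) := by
      refine ⟨((s ^ (4:ℕ) : ℝ) : ℂ) *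
        (Complex.cos ((2*φ : ℝ) : ℂ) + Complex.sin ((2*φ : ℝ) : ℂ) * Complex.I),
        Complex.arg_mul_cos_add_sin_mul_I hs4 h2φ, ?_⟩
      rw [norm_mul, Complex.norm_of_nonneg hs4.le, Complex.norm_cos_add_sin_mul_I,
        mul_one]
    have hz0 : z ≠ 0 := by
      intro h
      rw [h] at habsz
      simp at habsz
      nlinarith
    refine ⟨z, ⟨hz0, ?_⟩, ?_⟩
    · rw [habsz, hargz]
      have h22 : 2 * φ / 2 = φ := by ring
      rw [h22]
      exact pow_lt_pow_left₀ hslt hs.le (by norm_num)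
    · simp only [F]
      rw [habsz, hargz]
      have hroot : (s ^ (4:ℕ) : ℝ) ^ ((1:ℝ)/4) = s := by
        rw [← Real.rpow_natCast s 4, ← Real.rpow_mul hs.le]
        norm_num
      rw [hroot]
      have h22 : 2 * φ / 2 = φ := by ring
      rw [h22]
      have hu : ((s : ℂ)) * Complex.exp (Complex.I * (φ:ℂ)) = u := by
        rw [mul_comm Complex.I]
        exact Complex.norm_mul_exp_arg_mul_I u
      rw [hwu, mul_assoc, hu]
  have hbij : Set.BijOn F Ω D := ⟨hmaps, hinj, fun w hw => hsurj w hw⟩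
  exact ⟨hbij, hbij.image_eq⟩
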